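/- Let p ≥ 3 be a prime, k ≥ 1 an integer, and θ ∈ ℰ_p. Then x₀ = 1 is an attracting fixed point of the Ising–Potts mapping f_θ: f_θ(1) = 1 and |f_θ'(1)|_p < 1. Moreover, the basin of attraction of 1 equals ⋃_{n ≥ 0} f_θ^{−n}(ℰ_p); that is, for y ∈ ℚ_p whose forward orbit under f_θ is defined, f_θ^n(y) → 1 as n → ∞ if and only if f_θ^m(y) ∈ ℰ_p for some m ≥ 0. If in addition the congruence x^k ≡ −1 (mod p) has no solution in ℤ, then every y ∈ ℚ_p whose forward orbit under f_θ is defined satisfies f_θ^n(y) → 1. -/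

import Mathlib

/-- The Ising–Potts mapping `f_θ(x) = ((θx + 1)/(x + θ))^k` on `ℚ_p`. -/
noncomputable def isingPotts (p : ℕ) [Fact p.Prime] (θ : ℚ_[p]) (k : ℕ) (x : ℚ_[p]) : ℚ_[p] :=
  ((θ * x + 1) / (x + θ)) ^ k

/-- `ℰ_p = {x ∈ ℚ_p : |x|_p = 1, |x - 1|_p < p^{-1/(p-1)}}`. -/
noncomputable def padicExpDomain (p : ℕ) [Fact p.Prime] : Set ℚ_[p] :=
  {x | ‖x‖ = 1 ∧ ‖x - 1‖ < (p : ℝ) ^ (-(1 : ℝ) / ((p : ℝ) - 1))}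

section Aux

variable {p : ℕ} [Fact p.Prime]

/-- Ultrametric: the norm of a sum is the bigger norm when the norms differ. -/
lemma padic_add_norm {a b : ℚ_[p]} (h : ‖a‖ < ‖b‖) : ‖a + b‖ = ‖b‖ := by
  rw [Padic.add_eq_max_of_ne (ne_of_lt h), max_eq_right h.le]

lemma padic_norm_le_one_of_sub {g : ℚ_[p]} (h : ‖g - 1‖ ≤ 1) : ‖g‖ ≤ 1 := by
  have h2 := Padic.nonarchimedean (g - 1) 1
  simpa using h2.trans (max_le h (by norm_num))

/-- If `g ≡ 1` then `g^k ≡ 1` at least as strongly. -/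
lemma padic_norm_pow_sub_one_le {g : ℚ_[p]} (h : ‖g - 1‖ ≤ 1) (k : ℕ) :
    ‖g ^ k - 1‖ ≤ ‖g - 1‖ := by
  have hg : ‖g‖ ≤ 1 := padic_norm_le_one_of_sub h
  induction k with
  | zero => simpa using norm_nonneg _
  | succ n ih =>
    have key : g ^ (n + 1) - 1 = g ^ n * (g - 1) + (g ^ n - 1) := by ring
    rw [key]
    refine (Padic.nonarchimedean _ _).trans (max_le ?_ ih)
    rw [norm_mul, norm_pow]
    have h1 : ‖g‖ ^ n ≤ 1 := pow_le_one₀ (norm_nonneg g) hg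
    have := mul_le_mul_of_nonneg_right h1 (norm_nonneg (g - 1))
    simpa using this

variable (hp : 3 ≤ p) {θ : ℚ_[p]} (hθ : θ ∈ padicExpDomain p)

lemma padic_r_pos : (0 : ℝ) < (p : ℝ) ^ (-(1 : ℝ) / ((p : ℝ) - 1)) := by
  have : (0 : ℝ) < (p : ℝ) := by
    have := (Fact.out : p.Prime).pos; exact_mod_cast this
  exact Real.rpow_pos_of_pos this _

include hp in
lemma padic_r_lt_one : (p : ℝ) ^ (-(1 : ℝ) / ((p : ℝ) - 1)) < 1 := by
  have hp1 : (1 : ℝ) < (p : ℝ) := by exact_mod_cast lt_of_lt_of_le (by norm_num) hp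
  refine Real.rpow_lt_one_of_one_lt_of_neg hp1 ?_
  apply div_neg_of_neg_of_pos (by norm_num)
  linarith

include hp hθ in
lemma padic_theta_sub_one_lt_one : ‖θ - 1‖ < 1 := hθ.2.trans (padic_r_lt_one hp)

include hp in
lemma padic_norm_two : ‖(2 : ℚ_[p])‖ = 1 := by
  have hle : ‖(2 : ℚ_[p])‖ ≤ 1 := by
    have := Padic.norm_int_le_one (p := p) 2
    simpa using this
  rcases lt_or_eq_of_le hle with hlt | heq
  · exfalso
    have : (p : ℤ) ∣ 2 := by
      have := (Padic.norm_intCast_lt_one_iff (p := p) (k := 2)).mp (by simpa using hlt)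
      exact this
    have := Int.le_of_dvd (by norm_num) this
    omega
  · exact heq

include hp hθ in
lemma padic_theta_add_one : ‖θ + 1‖ = 1 := by
  have h : θ + 1 = (θ - 1) + 2 := by ring
  rw [h, padic_add_norm (by rw [padic_norm_two hp]; exact padic_theta_sub_one_lt_one hp hθ),
    padic_norm_two hp]

include hp in
lemma padic_mem_E_of {z : ℚ_[p]} (h : ‖z - 1‖ < (p : ℝ) ^ (-(1 : ℝ) / ((p : ℝ) - 1))) :
    z ∈ padicExpDomain p := by
  have h1 : ‖z - 1‖ < 1 := h.trans (padic_r_lt_one hp)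
  have hz : ‖z‖ = 1 := by
    have h2 : ‖z - 1‖ < ‖(1 : ℚ_[p])‖ := by simpa using h1
    have := padic_add_norm h2
    simpa using this
  exact ⟨hz, h⟩

lemma padic_g_sub_one {x : ℚ_[p]} (hne : x + θ ≠ 0) :
    (θ * x + 1) / (x + θ) - 1 = (θ - 1) * (x - 1) / (x + θ) := by
  field_simp
  ring

include hp hθ in
/-- Core landing lemma: if `‖x-1‖ ≤ ‖x+θ‖` and `x + θ ≠ 0` then `f(x) ∈ ℰ_p`. -/
lemma padic_land (k : ℕ) {x : ℚ_[p]} (hne : x + θ ≠ 0) (hxθ : ‖x - 1‖ ≤ ‖x + θ‖) :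
    isingPotts p θ k x ∈ padicExpDomain p := by
  set g : ℚ_[p] := (θ * x + 1) / (x + θ) with hg
  have hgn : ‖g - 1‖ = ‖θ - 1‖ * ‖x - 1‖ / ‖x + θ‖ := by
    rw [hg, padic_g_sub_one hne, norm_div, norm_mul]
  have hpos : 0 < ‖x + θ‖ := norm_pos_iff.mpr hne
  have hratio : ‖x - 1‖ / ‖x + θ‖ ≤ 1 := div_le_one_of_le₀ hxθ (norm_nonneg _)
  have hbound : ‖g - 1‖ ≤ ‖θ - 1‖ := by
    rw [hgn, mul_div_assoc]
    calc ‖θ - 1‖ * (‖x - 1‖ / ‖x + θ‖) ≤ ‖θ - 1‖ * 1 := by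
          exact mul_le_mul_of_nonneg_left hratio (norm_nonneg _)
      _ = ‖θ - 1‖ := mul_one _
  have hle1 : ‖g - 1‖ ≤ 1 := hbound.trans (padic_theta_sub_one_lt_one hp hθ).le
  have hfinal : ‖isingPotts p θ k x - 1‖ ≤ ‖θ - 1‖ := by
    have := padic_norm_pow_sub_one_le hle1 k
    exact this.trans hbound
  exact padic_mem_E_of hp (lt_of_le_of_lt hfinal hθ.2)

include hp hθ in
lemma padic_land_big (k : ℕ) {x : ℚ_[p]} (hx : 1 < ‖x‖) :
    isingPotts p θ k x ∈ padicExpDomain p := by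
  have hθn : ‖θ‖ = 1 := hθ.1
  have hxθ : ‖x + θ‖ = ‖x‖ := by
    rw [add_comm, padic_add_norm (by rw [hθn]; exact hx)]
  have hx1 : ‖x - 1‖ = ‖x‖ := by
    have : x - 1 = (-1 : ℚ_[p]) + x := by ring
    rw [this, padic_add_norm (by simpa using hx)]
  have hne : x + θ ≠ 0 := by
    intro h
    rw [h, norm_zero] at hxθ
    exact absurd hxθ.symm (lt_trans one_pos hx).ne'
  exact padic_land hp hθ k hne (le_of_eq (hx1.trans hxθ.symm))

include hp hθ in
lemma padic_land_small (k : ℕ) {x : ℚ_[p]} (hx : ‖x‖ ≤ 1) (hx1 : ‖x + 1‖ = 1) :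
    isingPotts p θ k x ∈ padicExpDomain p := by
  have hxθ : ‖x + θ‖ = 1 := by
    have h : x + θ = (θ - 1) + (x + 1) := by ring
    rw [h, padic_add_norm (by rw [hx1]; exact padic_theta_sub_one_lt_one hp hθ), hx1]
  have hsub : ‖x - 1‖ ≤ 1 := by
    have h := Padic.nonarchimedean x (-1 : ℚ_[p])
    have : x + (-1 : ℚ_[p]) = x - 1 := by ring
    rw [this] at h
    refine h.trans (max_le hx (by norm_num))
  have hne : x + θ ≠ 0 := by
    intro h
    rw [h, norm_zero] at hxθ
    norm_num at hxθ
  exact padic_land hp hθ k hne (hxθ ▸ hsub)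

include hp hθ in
/-- Contraction on `ℰ_p`. -/
lemma padic_contract (k : ℕ) {x : ℚ_[p]} (hx : x ∈ padicExpDomain p) :
    isingPotts p θ k x ∈ padicExpDomain p ∧
      ‖isingPotts p θ k x - 1‖ ≤ ‖θ - 1‖ * ‖x - 1‖ := by
  have hx1 : ‖x - 1‖ < 1 := hx.2.trans (padic_r_lt_one hp)
  have hxp1 : ‖x + 1‖ = 1 := by
    have h : x + 1 = (x - 1) + 2 := by ring
    rw [h, padic_add_norm (by rw [padic_norm_two hp]; exact hx1), padic_norm_two hp]
  have hxθ : ‖x + θ‖ = 1 := by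
    have h : x + θ = (θ - 1) + (x + 1) := by ring
    rw [h, padic_add_norm (by rw [hxp1]; exact padic_theta_sub_one_lt_one hp hθ), hxp1]
  have hne : x + θ ≠ 0 := by
    intro h; rw [h, norm_zero] at hxθ; norm_num at hxθ
  set g : ℚ_[p] := (θ * x + 1) / (x + θ) with hg
  have hgn : ‖g - 1‖ = ‖θ - 1‖ * ‖x - 1‖ := by
    rw [hg, padic_g_sub_one hne, norm_div, norm_mul, hxθ, div_one]
  have hle1 : ‖g - 1‖ ≤ 1 := by
    rw [hgn]
    calc ‖θ - 1‖ * ‖x - 1‖ ≤ 1 * 1 := by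
          exact mul_le_mul (padic_theta_sub_one_lt_one hp hθ).le hx1.le (norm_nonneg _)
            (by norm_num)
      _ = 1 := by norm_num
  have hkey : ‖isingPotts p θ k x - 1‖ ≤ ‖θ - 1‖ * ‖x - 1‖ := by
    have := padic_norm_pow_sub_one_le hle1 k
    rw [hgn] at this
    exact this
  refine ⟨padic_mem_E_of hp ?_, hkey⟩
  calc ‖isingPotts p θ k x - 1‖ ≤ ‖θ - 1‖ * ‖x - 1‖ := hkey
    _ ≤ ‖θ - 1‖ * 1 := mul_le_mul_of_nonneg_left hx1.le (norm_nonneg _)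
    _ = ‖θ - 1‖ := mul_one _
    _ < _ := hθ.2

include hp hθ in
lemma padic_tendsto_of_mem (k : ℕ) {x : ℚ_[p]} (hx : x ∈ padicExpDomain p) :
    Filter.Tendsto (fun n => (isingPotts p θ k)^[n] x) Filter.atTop (nhds 1) := by
  set c : ℝ := ‖θ - 1‖ with hc
  have hc0 : 0 ≤ c := norm_nonneg _
  have hc1 : c < 1 := padic_theta_sub_one_lt_one hp hθ
  have hiter : ∀ n : ℕ, (isingPotts p θ k)^[n] x ∈ padicExpDomain p ∧
      ‖(isingPotts p θ k)^[n] x - 1‖ ≤ c ^ n * ‖x - 1‖ := by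
    intro n
    induction n with
    | zero => simpa using hx
    | succ m ih =>
      rw [Function.iterate_succ_apply']
      obtain ⟨hmem, hb⟩ := ih
      obtain ⟨hmem', hb'⟩ := padic_contract hp hθ k hmem
      refine ⟨hmem', ?_⟩
      calc ‖isingPotts p θ k ((isingPotts p θ k)^[m] x) - 1‖
          ≤ c * ‖(isingPotts p θ k)^[m] x - 1‖ := hb'
        _ ≤ c * (c ^ m * ‖x - 1‖) := mul_le_mul_of_nonneg_left hb hc0
        _ = c ^ (m + 1) * ‖x - 1‖ := by ring
  rw [tendsto_iff_norm_sub_tendsto_zero]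
  refine squeeze_zero (fun n => norm_nonneg _) (fun n => (hiter n).2) ?_
  have h0 : Filter.Tendsto (fun n : ℕ => c ^ n) Filter.atTop (nhds 0) :=
    tendsto_pow_atTop_nhds_zero_of_lt_one hc0 hc1
  have := h0.mul_const ‖x - 1‖
  simpa using this

include hp hθ in
/-- After one step the orbit is never a "bad" point, assuming `ξ^k = -1` is unsolvable. -/
lemma padic_after_step (k : ℕ) (hk : 1 ≤ k) (hξ : ¬ ∃ ξ : ZMod p, ξ ^ k = -1)
    {x : ℚ_[p]} (hne : x + θ ≠ 0) :
    1 < ‖isingPotts p θ k x‖ ∨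
      (‖isingPotts p θ k x‖ ≤ 1 ∧ ‖isingPotts p θ k x + 1‖ = 1) := by
  set g : ℚ_[p] := (θ * x + 1) / (x + θ) with hg
  have hfx : isingPotts p θ k x = g ^ k := rfl
  have hfn : ‖isingPotts p θ k x‖ = ‖g‖ ^ k := by rw [hfx, norm_pow]
  rcases lt_trichotomy ‖g‖ 1 with hlt | heq | hgt
  · right
    have hlt' : ‖g ^ k‖ < 1 := by
      rw [norm_pow]
      exact pow_lt_one₀ (norm_nonneg _) hlt (by omega)
    constructor
    · rw [hfx]; exact hlt'.le
    · rw [hfx]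
      have := padic_add_norm (a := g ^ k) (b := (1 : ℚ_[p])) (by simpa using hlt')
      simpa using this
  · right
    have hle : ‖isingPotts p θ k x‖ ≤ 1 := by rw [hfn, heq, one_pow]
    refine ⟨hle, ?_⟩
    have hle2 : ‖isingPotts p θ k x + 1‖ ≤ 1 := by
      refine (Padic.nonarchimedean _ _).trans (max_le hle (by norm_num))
    rcases lt_or_eq_of_le hle2 with hlt2 | heq2
    · exfalso
      -- produce a solution of ξ^k = -1 in ZMod p
      have hgle : ‖g‖ ≤ 1 := heq.le
      set gI : ℤ_[p] := ⟨g, hgle⟩ with hgI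
      have hval : ‖(gI ^ k + 1 : ℤ_[p])‖ < 1 := by
        have hcoe : ((gI ^ k + 1 : ℤ_[p]) : ℚ_[p]) = g ^ k + 1 := by
          push_cast [hgI]
          rfl
        rw [PadicInt.norm_def, hcoe]
        rw [hfx] at hlt2
        exact hlt2
      have hmem : (gI ^ k + 1 : ℤ_[p]) ∈ IsLocalRing.maximalIdeal ℤ_[p] := by
        rw [PadicInt.maximalIdeal_eq_span_p, Ideal.mem_span_singleton,
          ← PadicInt.norm_lt_one_iff_dvd]
        exact hval
      have hker : PadicInt.toZMod (gI ^ k + 1) = 0 := by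
        rw [← RingHom.mem_ker, PadicInt.ker_toZMod]
        exact hmem
      refine hξ ⟨PadicInt.toZMod gI, ?_⟩
      have : PadicInt.toZMod gI ^ k + 1 = 0 := by
        rw [← map_pow]
        simpa using hker
      exact eq_neg_of_add_eq_zero_left this
    · exact heq2
  · left
    rw [hfn]
    exact one_lt_pow₀ hgt (by omega)

end Aux

/-- for `p ≥ 3` prime, `k ≥ 1` and `θ ∈ ℰ_p`, the point `1` is an attracting fixed
point of `f_θ`; its basin of attraction is `⋃_{n ≥ 0} f_θ^{-n}(ℰ_p)`; and if `x^k ≡ -1 (mod p)`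
has no solution, every point with well-defined forward orbit is attracted to `1`. -/
theorem isingPotts_one_attracting_and_basin
    (p : ℕ) [Fact p.Prime] (hp : 3 ≤ p) (k : ℕ) (hk : 1 ≤ k)
    (θ : ℚ_[p]) (hθ : θ ∈ padicExpDomain p) :
    isingPotts p θ k 1 = 1 ∧
    ‖deriv (isingPotts p θ k) 1‖ < 1 ∧
    (∀ y : ℚ_[p], (∀ n : ℕ, (isingPotts p θ k)^[n] y ≠ -θ) →
      (Filter.Tendsto (fun n => (isingPotts p θ k)^[n] y) Filter.atTop (nhds 1) ↔
        ∃ m : ℕ, (isingPotts p θ k)^[m] y ∈ padicExpDomain p)) ∧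
    ((¬ ∃ ξ : ZMod p, ξ ^ k = -1) →
      ∀ y : ℚ_[p], (∀ n : ℕ, (isingPotts p θ k)^[n] y ≠ -θ) →
        Filter.Tendsto (fun n => (isingPotts p θ k)^[n] y) Filter.atTop (nhds 1)) := by
  have hθ1 : ‖θ + 1‖ = 1 := padic_theta_add_one hp hθ
  have hθ1' : (1 : ℚ_[p]) + θ ≠ 0 := by
    rw [add_comm]
    intro h; rw [h, norm_zero] at hθ1; norm_num at hθ1
  have hθne : θ + 1 ≠ 0 := by
    intro h; rw [h, norm_zero] at hθ1; norm_num at hθ1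
  have hfix : isingPotts p θ k 1 = 1 := by
    unfold isingPotts
    rw [mul_one, add_comm 1 θ, div_self hθne, one_pow]
  -- derivative
  have hd : HasDerivAt (isingPotts p θ k)
      ((k : ℚ_[p]) * ((θ * 1 + 1) / (1 + θ)) ^ (k - 1) *
        ((θ * (1 + θ) - (θ * 1 + 1) * 1) / (1 + θ) ^ 2)) 1 := by
    have hu : HasDerivAt (fun x : ℚ_[p] => θ * x + 1) θ 1 := by
      simpa using ((hasDerivAt_id (1 : ℚ_[p])).const_mul θ).add_const 1
    have hv : HasDerivAt (fun x : ℚ_[p] => x + θ) 1 1 := (hasDerivAt_id 1).add_const θ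
    exact (hu.div hv hθ1').pow k
  have hderiv : deriv (isingPotts p θ k) 1 = (k : ℚ_[p]) * ((θ - 1) / (θ + 1)) := by
    rw [hd.deriv]
    have h1 : (θ * 1 + 1) / (1 + θ) = 1 := by rw [mul_one, add_comm 1 θ, div_self hθne]
    rw [h1, one_pow]
    field_simp
    ring
  have hderivlt : ‖deriv (isingPotts p θ k) 1‖ < 1 := by
    rw [hderiv, norm_mul, norm_div, hθ1, div_one]
    have hk' : ‖(k : ℚ_[p])‖ ≤ 1 := by
      have := Padic.norm_int_le_one (p := p) (k : ℤ)
      push_cast at this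
      exact this
    calc ‖(k : ℚ_[p])‖ * ‖θ - 1‖ ≤ 1 * ‖θ - 1‖ :=
          mul_le_mul_of_nonneg_right hk' (norm_nonneg _)
      _ = ‖θ - 1‖ := one_mul _
      _ < 1 := padic_theta_sub_one_lt_one hp hθ
  -- basin characterization
  have hbasin : ∀ y : ℚ_[p], (∀ n : ℕ, (isingPotts p θ k)^[n] y ≠ -θ) →
      (Filter.Tendsto (fun n => (isingPotts p θ k)^[n] y) Filter.atTop (nhds 1) ↔
        ∃ m : ℕ, (isingPotts p θ k)^[m] y ∈ padicExpDomain p) := by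
    intro y hy
    constructor
    · intro ht
      obtain ⟨N, hN⟩ := (Metric.tendsto_atTop.mp ht) _ (padic_r_pos (p := p))
      refine ⟨N, padic_mem_E_of hp ?_⟩
      rw [← dist_eq_norm]
      exact hN N le_rfl
    · rintro ⟨m, hm⟩
      have h1 := padic_tendsto_of_mem hp hθ k hm
      rw [← Filter.tendsto_add_atTop_iff_nat m]
      simpa [Function.iterate_add_apply] using h1
  refine ⟨hfix, hderivlt, hbasin, ?_⟩
  -- final part
  intro hξ y hy
  have hy0 : y + θ ≠ 0 := by
    have h := hy 0
    simp only [Function.iterate_zero_apply] at h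
    intro h0; exact h (eq_neg_of_add_eq_zero_left h0)
  have hy1 : isingPotts p θ k y + θ ≠ 0 := by
    have h := hy 1
    simp only [Function.iterate_one] at h
    intro h0; exact h (eq_neg_of_add_eq_zero_left h0)
  have hstep := padic_after_step hp hθ k hk hξ hy0
  have hmem2 : (isingPotts p θ k)^[2] y ∈ padicExpDomain p := by
    have h2 : (isingPotts p θ k)^[2] y = isingPotts p θ k (isingPotts p θ k y) := by
      simp [Function.iterate_succ_apply']
    rw [h2]
    rcases hstep with hbig | ⟨hle, hone⟩
    · exact padic_land_big hp hθ k hbig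
    · exact padic_land_small hp hθ k hle hone
  exact (hbasin y hy).mpr ⟨2, hmem2⟩
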